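/- arXiv:2110.07263 — 2 statements merged into one kernel-verified Lean document; each statement's English description precedes it below -/
import Mathlib

section
/- Let 1 < p < ∞ and N ≥ 1. There exists a constant C = C(p) > 0 such that for all vectors a, b ∈ ℝ^N one has ⟨|a|^{p-2} a − |b|^{p-2} b, a − b⟩ ≥ C (|a| + |b|)^{p-2} |a − b|², where ⟨·,·⟩ and |·| denote the Euclidean inner product and norm. -/
open RealInnerProductSpace

private lemma my_id1 {α p : ℝ} (hα : 0 ≤ α) (hp : 1 < p) : α ^ (p - 2) * α = α ^ (p - 1) := by
  have h : α ^ (p - 1) = α ^ ((p - 2) + 1) := by ring_nf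
  rw [h, Real.rpow_add' hα (by intro h'; nlinarith), Real.rpow_one]

/-- Bernoulli-type: for `1 < p < 2`, `0 ≤ β ≤ α`, `0 < α`:
`(p-1) * α^(p-2) * (α-β) ≤ α^(p-1) - β^(p-1)`. -/
private lemma my_bern {p α β : ℝ} (hp : 1 < p) (hp2 : p < 2) (hβ : 0 ≤ β) (hba : β ≤ α)
    (hαpos : 0 < α) : (p - 1) * (α ^ (p-2) * (α - β)) ≤ α ^ (p-1) - β ^ (p-1) := by
  have ht : 0 ≤ β / α := div_nonneg hβ hαpos.le
  have hgm := Real.geom_mean_le_arith_mean2_weighted (by linarith : (0:ℝ) ≤ p - 1)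
    (by linarith : (0:ℝ) ≤ 2 - p) ht zero_le_one (by ring)
  rw [Real.one_rpow, mul_one] at hgm
  -- hgm : (β/α)^(p-1) ≤ (p-1)*(β/α) + (2-p)
  have hdiv : (β / α) ^ (p-1) = β ^ (p-1) / α ^ (p-1) := Real.div_rpow hβ hαpos.le (p-1)
  have hpow : α ^ (p-2) * α = α ^ (p-1) := my_id1 hαpos.le hp
  have hApos : 0 < α ^ (p-1) := Real.rpow_pos_of_pos hαpos _
  have h2 : β ^ (p-1) ≤ (p-1) * (β / α) * α ^ (p-1) + (2-p) * α ^ (p-1) := by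
    have h := mul_le_mul_of_nonneg_right hgm hApos.le
    rw [hdiv, div_mul_cancel₀ _ (ne_of_gt hApos)] at h
    linarith [h]
  have h3 : (p-1) * (β / α) * α ^ (p-1) = (p-1) * (α ^ (p-2) * β) := by
    rw [← hpow]; field_simp
  rw [h3] at h2
  have hx : α ^ (p-2) * (α - β) = α ^ (p-1) - α ^ (p-2) * β := by rw [mul_sub, hpow]
  rw [hx]
  nlinarith [h2]

-- endpoint s = -αβ
private lemma my_EA {p c α β : ℝ} (hp : 1 < p) (hc0 : 0 ≤ c) (hcle : c ≤ (2:ℝ) ^ (-p))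
    (hα : 0 ≤ α) (hβ : 0 ≤ β) :
    c * (α + β) ^ (p - 2) * (α + β) ^ 2 ≤ (α ^ (p-1) + β ^ (p-1)) * (α + β) := by
  have hS : (0:ℝ) ≤ α ^ (p-1) + β ^ (p-1) :=
    add_nonneg (Real.rpow_nonneg hα _) (Real.rpow_nonneg hβ _)
  have h1 : (α + β) ^ (p-1) ≤ 2 ^ (p-1) * (α ^ (p-1) + β ^ (p-1)) := by
    rcases le_total α β with h | h
    · calc (α + β) ^ (p-1) ≤ (2 * β) ^ (p-1) :=
            Real.rpow_le_rpow (add_nonneg hα hβ) (by linarith) (by linarith)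
        _ = 2 ^ (p-1) * β ^ (p-1) := Real.mul_rpow (by norm_num) hβ
        _ ≤ 2 ^ (p-1) * (α ^ (p-1) + β ^ (p-1)) := by
            have := Real.rpow_nonneg hα (p-1)
            have h2 : (0:ℝ) ≤ (2:ℝ) ^ (p-1) := Real.rpow_nonneg (by norm_num) _
            nlinarith
    · calc (α + β) ^ (p-1) ≤ (2 * α) ^ (p-1) :=
            Real.rpow_le_rpow (add_nonneg hα hβ) (by linarith) (by linarith)
        _ = 2 ^ (p-1) * α ^ (p-1) := Real.mul_rpow (by norm_num) hα
        _ ≤ 2 ^ (p-1) * (α ^ (p-1) + β ^ (p-1)) := by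
            have := Real.rpow_nonneg hβ (p-1)
            have h2 : (0:ℝ) ≤ (2:ℝ) ^ (p-1) := Real.rpow_nonneg (by norm_num) _
            nlinarith
  have hC2 : (2:ℝ) ^ (-p) * 2 ^ (p-1) = 1/2 := by
    rw [← Real.rpow_add two_pos, show -p + (p-1) = (-1:ℝ) by ring, Real.rpow_neg_one]
    norm_num
  have h2 : (α+β) ^ (p-2) * (α+β) ^ 2 = (α+β) ^ (p-1) * (α+β) := by
    rw [sq, ← mul_assoc, my_id1 (add_nonneg hα hβ) hp]
  have step : c * (α+β) ^ (p-1) ≤ (1/2) * (α ^ (p-1) + β ^ (p-1)) := by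
    calc c * (α+β) ^ (p-1) ≤ (2:ℝ) ^ (-p) * (α+β) ^ (p-1) :=
          mul_le_mul_of_nonneg_right hcle (Real.rpow_nonneg (add_nonneg hα hβ) _)
      _ ≤ (2:ℝ) ^ (-p) * (2 ^ (p-1) * (α ^ (p-1) + β ^ (p-1))) :=
          mul_le_mul_of_nonneg_left h1 (Real.rpow_pos_of_pos two_pos _).le
      _ = (1/2) * (α ^ (p-1) + β ^ (p-1)) := by rw [← mul_assoc, hC2]
  calc c * (α+β) ^ (p-2) * (α+β) ^ 2
      = (c * (α+β) ^ (p-1)) * (α+β) := by rw [mul_assoc, h2]; ring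
    _ ≤ ((1/2) * (α ^ (p-1) + β ^ (p-1))) * (α+β) :=
        mul_le_mul_of_nonneg_right step (add_nonneg hα hβ)
    _ ≤ (α ^ (p-1) + β ^ (p-1)) * (α+β) := by
        nlinarith [mul_nonneg hS (add_nonneg hα hβ)]

-- endpoint s = αβ, assuming β ≤ α
private lemma my_EB {p c α β : ℝ} (hp : 1 < p) (hc0 : 0 ≤ c) (hcle : c ≤ (2:ℝ) ^ (-p))
    (hcle2 : c ≤ p - 1) (hα : 0 ≤ α) (hβ : 0 ≤ β) (hba : β ≤ α) :
    c * (α + β) ^ (p - 2) * (α - β) ^ 2 ≤ (α ^ (p-1) - β ^ (p-1)) * (α - β) := by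
  rcases eq_or_lt_of_le hba with heq | hlt
  · subst heq; simp
  have hαpos : 0 < α := lt_of_le_of_lt hβ hlt
  have hab : 0 < α - β := sub_pos.2 hlt
  rcases le_or_gt 2 p with h2p | h2p
  · -- p ≥ 2
    have key1 : (α+β) ^ (p-2) ≤ 2 ^ (p-2) * α ^ (p-2) := by
      calc (α+β) ^ (p-2) ≤ (2*α) ^ (p-2) :=
            Real.rpow_le_rpow (add_nonneg hα hβ) (by linarith) (by linarith)
        _ = 2 ^ (p-2) * α ^ (p-2) := Real.mul_rpow (by norm_num) hα
    have key2 : β ^ (p-1) ≤ α ^ (p-2) * β := by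
      rw [← my_id1 hβ hp]
      exact mul_le_mul_of_nonneg_right (Real.rpow_le_rpow hβ hba (by linarith)) hβ
    have key3 : α ^ (p-2) * (α - β) ≤ α ^ (p-1) - β ^ (p-1) := by
      have := my_id1 hα hp
      nlinarith
    have hC2 : (2:ℝ) ^ (-p) * 2 ^ (p-2) = 1/4 := by
      rw [← Real.rpow_add two_pos, show -p + (p-2) = (-2:ℝ) by ring,
        show (-2:ℝ) = ((-2:ℤ):ℝ) by norm_num, Real.rpow_intCast]
      norm_num
    have hX : (0:ℝ) ≤ α ^ (p-2) := Real.rpow_nonneg hα _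
    calc c * (α+β) ^ (p-2) * (α-β) ^ 2
        ≤ (2:ℝ) ^ (-p) * (α+β) ^ (p-2) * (α-β) ^ 2 := by
          apply mul_le_mul_of_nonneg_right _ (sq_nonneg _)
          exact mul_le_mul_of_nonneg_right hcle
            (Real.rpow_nonneg (add_nonneg hα hβ) _)
      _ ≤ (2:ℝ) ^ (-p) * (2 ^ (p-2) * α ^ (p-2)) * (α-β) ^ 2 := by
          apply mul_le_mul_of_nonneg_right _ (sq_nonneg _)
          exact mul_le_mul_of_nonneg_left key1 (Real.rpow_pos_of_pos two_pos _).le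
      _ = (1/4) * α ^ (p-2) * (α-β) ^ 2 := by rw [← mul_assoc, hC2]
      _ ≤ (α ^ (p-2) * (α-β)) * (α-β) := by nlinarith [mul_nonneg hX (sq_nonneg (α-β))]
      _ ≤ (α ^ (p-1) - β ^ (p-1)) * (α-β) :=
          mul_le_mul_of_nonneg_right key3 hab.le
  · -- 1 < p < 2
    have hmono : (α+β) ^ (p-2) ≤ α ^ (p-2) :=
      Real.rpow_le_rpow_of_nonpos hαpos (by linarith) (by linarith)
    have hP : (0:ℝ) ≤ (α+β) ^ (p-2) := Real.rpow_nonneg (add_nonneg hα hβ) _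
    have hber := my_bern hp h2p hβ hba hαpos
    calc c * (α+β) ^ (p-2) * (α-β) ^ 2
        ≤ ((p-1) * α ^ (p-2)) * (α-β) ^ 2 :=
          mul_le_mul_of_nonneg_right (mul_le_mul hcle2 hmono hP (by linarith)) (sq_nonneg _)
      _ = ((p-1) * (α ^ (p-2) * (α-β))) * (α-β) := by ring
      _ ≤ (α ^ (p-1) - β ^ (p-1)) * (α-β) := mul_le_mul_of_nonneg_right hber hab.le

private lemma my_key {p c : ℝ} (hp : 1 < p) (hc0 : 0 ≤ c) (hcle : c ≤ (2:ℝ) ^ (-p))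
    (hcle2 : c ≤ p - 1) {α β s : ℝ} (hα : 0 ≤ α) (hβ : 0 ≤ β)
    (hs1 : -(α*β) ≤ s) (hs2 : s ≤ α*β) :
    c * (α+β) ^ (p-2) * (α^2 + β^2 - 2*s) ≤
      α ^ (p-2) * α^2 + β ^ (p-2) * β^2 - (α ^ (p-2) + β ^ (p-2)) * s := by
  have hXa : α ^ (p-2) * α^2 = α ^ (p-1) * α := by rw [sq, ← mul_assoc, my_id1 hα hp]
  have hXb : β ^ (p-2) * β^2 = β ^ (p-1) * β := by rw [sq, ← mul_assoc, my_id1 hβ hp]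
  have hYa : α ^ (p-2) * α = α ^ (p-1) := my_id1 hα hp
  have hYb : β ^ (p-2) * β = β ^ (p-1) := my_id1 hβ hp
  have hE2 : c * (α+β) ^ (p-2) * (α^2 + β^2 - 2*(-(α*β))) ≤
      α ^ (p-2) * α^2 + β ^ (p-2) * β^2 - (α ^ (p-2) + β ^ (p-2)) * (-(α*β)) := by
    have h := my_EA hp hc0 hcle hα hβ
    nlinarith [h]
  have hE1 : c * (α+β) ^ (p-2) * (α^2 + β^2 - 2*(α*β)) ≤
      α ^ (p-2) * α^2 + β ^ (p-2) * β^2 - (α ^ (p-2) + β ^ (p-2)) * (α*β) := by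
    rcases le_total β α with h | h
    · have hb := my_EB hp hc0 hcle hcle2 hα hβ h
      nlinarith [hb]
    · have hb := my_EB hp hc0 hcle hcle2 hβ hα h
      rw [show β + α = α + β from add_comm β α] at hb
      nlinarith [hb]
  set K : ℝ := 2 * (c * (α+β) ^ (p-2)) - (α ^ (p-2) + β ^ (p-2)) with hK
  rcases le_total 0 K with h | h
  · nlinarith [mul_le_mul_of_nonneg_left hs2 h]
  · nlinarith [mul_le_mul_of_nonpos_left hs1 h]

/-- Algebraic inequality: for `1 < p < ∞` there exists `C = C(p) > 0` such that for all `N ≥ 1`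
and all `a b : ℝ^N`,
`⟨|a|^{p-2} a − |b|^{p-2} b, a − b⟩ ≥ C (|a| + |b|)^{p-2} |a − b|²`,
where powers are real powers (with `0` raised to a negative exponent taken as `0`). -/
theorem stmt0 (p : ℝ) (hp1 : 1 < p) :
    ∃ C : ℝ, 0 < C ∧ ∀ (N : ℕ), 1 ≤ N →
      ∀ a b : EuclideanSpace ℝ (Fin N),
        C * (‖a‖ + ‖b‖) ^ (p - 2) * ‖a - b‖ ^ 2 ≤
          ⟪(‖a‖ ^ (p - 2) • a - ‖b‖ ^ (p - 2) • b : EuclideanSpace ℝ (Fin N)), a - b⟫ := by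
  set c : ℝ := min 1 (p - 1) * (2:ℝ) ^ (-p) with hc
  have h2p : (0:ℝ) < (2:ℝ) ^ (-p) := Real.rpow_pos_of_pos two_pos _
  have h2p1 : (2:ℝ) ^ (-p) ≤ 1 :=
    Real.rpow_le_one_of_one_le_of_nonpos (by norm_num) (by linarith)
  have hc_pos : 0 < c := mul_pos (lt_min one_pos (by linarith)) h2p
  have hcle : c ≤ (2:ℝ) ^ (-p) := by
    calc c ≤ 1 * (2:ℝ) ^ (-p) :=
          mul_le_mul_of_nonneg_right (min_le_left _ _) h2p.le
      _ = (2:ℝ) ^ (-p) := one_mul _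
  have hcle2 : c ≤ p - 1 := by
    calc c ≤ (p-1) * (2:ℝ) ^ (-p) :=
          mul_le_mul_of_nonneg_right (min_le_right _ _) h2p.le
      _ ≤ (p-1) * 1 := mul_le_mul_of_nonneg_left h2p1 (by linarith)
      _ = p - 1 := mul_one _
  refine ⟨c, hc_pos, fun N _ a b => ?_⟩
  have hab := abs_real_inner_le_norm a b
  obtain ⟨hs1, hs2⟩ := abs_le.1 hab
  have hnorm : ‖a - b‖^2 = ‖a‖^2 - 2 * ⟪a, b⟫ + ‖b‖^2 := norm_sub_sq_real a b
  have hinner : ⟪(‖a‖ ^ (p - 2) • a - ‖b‖ ^ (p - 2) • b : EuclideanSpace ℝ (Fin N)), a - b⟫ =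
      ‖a‖ ^ (p-2) * ‖a‖^2 + ‖b‖ ^ (p-2) * ‖b‖^2 - (‖a‖ ^ (p-2) + ‖b‖ ^ (p-2)) * ⟪a, b⟫ := by
    simp only [inner_sub_left, inner_sub_right, real_inner_smul_left,
      real_inner_self_eq_norm_sq, real_inner_comm b a]
    ring
  have hkey := my_key hp1 hc_pos.le hcle hcle2 (norm_nonneg a) (norm_nonneg b)
    (neg_le.1 (by linarith) : -(‖a‖ * ‖b‖) ≤ ⟪a, b⟫) hs2
  rw [hinner, hnorm]
  nlinarith [hkey]
end

section
/- Let V be a real separable reflexive Banach space with dual V*, and let A : V → V* be a map that is bounded (maps norm-bounded sets to norm-bounded sets), continuous (norm-to-norm), coercive (⟨A v, v⟩ / ‖v‖ → ∞ as ‖v‖ → ∞), and monotone (⟨A u − A v, u − v⟩ ≥ 0 for all u, v ∈ V). Then A is surjective: for every f ∈ V* there exists u ∈ V with A(u) = f. If moreover A is strictly monotone (⟨A u − A v, u − v⟩ > 0 whenever u ≠ v), then A is also injective. -/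
open MeasureTheory Metric Filter NormedSpace Convolution

local notation "⟪" x ", " y "⟫" => @inner ℝ _ _ x y


lemma aux_expand {E : Type*} [NormedAddCommGroup E] [InnerProductSpace ℝ E]
    {G : E → E} {ε : ℝ}
    (hm : ∀ x y, ε * ‖x - y‖ ^ 2 ≤ ⟪G x - G y, x - y⟫) (x y : E) :
    ε * ‖x - y‖ ≤ ‖G x - G y‖ := by
  rcases eq_or_ne x y with rfl | hne
  · simp
  · have h1 : ε * ‖x - y‖ ^ 2 ≤ ‖G x - G y‖ * ‖x - y‖ :=
      (hm x y).trans (real_inner_le_norm _ _)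
    have h2 : 0 < ‖x - y‖ := by simpa [sub_eq_zero] using hne
    nlinarith [h2]

/-- Smooth strongly monotone maps on Euclidean space are surjective. -/
lemma aux_smooth_surj {d : ℕ} {G : EuclideanSpace ℝ (Fin d) → EuclideanSpace ℝ (Fin d)}
    (hG : ContDiff ℝ 1 G) {ε : ℝ} (hε : 0 < ε)
    (hm : ∀ x y, ε * ‖x - y‖ ^ 2 ≤ ⟪G x - G y, x - y⟫) :
    Function.Surjective G := by
  have hexp := aux_expand hm
  have hGc : Continuous G := hG.continuous
  -- range is closed
  have hclosed : IsClosed (Set.range G) := by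
    apply IsSeqClosed.isClosed
    intro u p hu hup
    choose x hx using hu
    have hcauchy : CauchySeq x := by
      rw [Metric.cauchySeq_iff]
      intro δ hδ
      have hu' : CauchySeq u := hup.cauchySeq
      rw [Metric.cauchySeq_iff] at hu'
      obtain ⟨N, hN⟩ := hu' (ε * δ) (by positivity)
      refine ⟨N, fun m hm' n hn' => ?_⟩
      have h1 : ε * ‖x m - x n‖ ≤ ‖G (x m) - G (x n)‖ := hexp _ _
      rw [hx m, hx n] at h1
      have h2 : dist (u m) (u n) < ε * δ := hN m hm' n hn'
      rw [dist_eq_norm] at h2 ⊢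
      nlinarith
    obtain ⟨q, hq⟩ := cauchySeq_tendsto_of_complete hcauchy
    refine ⟨q, ?_⟩
    have : Tendsto (fun n => G (x n)) atTop (nhds (G q)) := (hGc.tendsto q).comp hq
    simp only [hx] at this
    exact tendsto_nhds_unique this hup
  -- range is open
  have hopen : IsOpen (Set.range G) := by
    rw [isOpen_iff_mem_nhds]
    rintro y ⟨x, rfl⟩
    have hD : HasStrictFDerivAt G (fderiv ℝ G x) x := hG.hasStrictFDerivAt one_ne_zero
    set D := fderiv ℝ G x with hDdef
    have hpos : ∀ h : EuclideanSpace ℝ (Fin d), ε * ‖h‖ ^ 2 ≤ ⟪D h, h⟫ := by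
      intro h
      have hc : HasDerivAt (fun t : ℝ => x + t • h) h 0 := by
        simpa using ((hasDerivAt_id (0:ℝ)).smul_const h).const_add x
      have hD0 : HasFDerivAt G (D : EuclideanSpace ℝ (Fin d) →L[ℝ] EuclideanSpace ℝ (Fin d))
          (x + (0:ℝ) • h) := by simpa using hD.hasFDerivAt
      have hline : HasDerivAt (fun t : ℝ => G (x + t • h)) (D h) 0 := by
        exact hD0.comp_hasDerivAt 0 hc
      rw [hasDerivAt_iff_tendsto_slope] at hline
      have hline' : Tendsto (slope (fun t : ℝ => G (x + t • h)) 0)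
          (nhdsWithin 0 (Set.Ioi 0)) (nhds (D h)) :=
        hline.mono_left (nhdsWithin_mono 0 (by intro t ht; simpa using ne_of_gt ht))
      have hin : Tendsto (fun t => ⟪slope (fun t : ℝ => G (x + t • h)) 0 t, h⟫)
          (nhdsWithin 0 (Set.Ioi 0)) (nhds ⟪D h, h⟫) :=
        ((continuous_inner.comp (continuous_id.prodMk continuous_const)).tendsto _).comp hline'
      refine ge_of_tendsto hin ?_
      filter_upwards [self_mem_nhdsWithin] with t (ht : 0 < t)
      have hkey := hm (x + t • h) x
      simp only [add_sub_cancel_left] at hkey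
      rw [norm_smul, real_inner_smul_right] at hkey
      have hslope : slope (fun t : ℝ => G (x + t • h)) 0 t
          = t⁻¹ • (G (x + t • h) - G x) := by
        simp [slope, vsub_eq_sub]
      rw [hslope, real_inner_smul_left]
      simp only [Real.norm_eq_abs, abs_of_pos ht] at hkey
      rw [inv_mul_eq_div, le_div_iff₀ ht]
      nlinarith [hkey, ht]
    have hinj : Function.Injective D := by
      intro a b hab
      have h1 := hpos (a - b)
      rw [map_sub, hab, sub_self] at h1
      simp only [inner_zero_left] at h1
      have h2 : ‖a - b‖ = 0 := by
        by_contra hne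
        have hpos' : 0 < ‖a - b‖ := lt_of_le_of_ne (norm_nonneg _) (Ne.symm hne)
        nlinarith [mul_pos hε (pow_pos hpos' 2)]
      rwa [norm_eq_zero, sub_eq_zero] at h2
    have hbij : Function.Bijective D :=
      ⟨hinj, (LinearMap.injective_iff_surjective
        (f := (D : EuclideanSpace ℝ (Fin d) →ₗ[ℝ] EuclideanSpace ℝ (Fin d)))).mp hinj⟩
    let e : EuclideanSpace ℝ (Fin d) ≃L[ℝ] EuclideanSpace ℝ (Fin d) :=
      (LinearEquiv.ofBijective (D : EuclideanSpace ℝ (Fin d) →ₗ[ℝ] EuclideanSpace ℝ (Fin d))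
        hbij).toContinuousLinearEquiv
    have he : (e : EuclideanSpace ℝ (Fin d) →L[ℝ] EuclideanSpace ℝ (Fin d)) = D := by
      ext v; rfl
    have hD' : HasStrictFDerivAt G
        (e : EuclideanSpace ℝ (Fin d) →L[ℝ] EuclideanSpace ℝ (Fin d)) x := by
      rw [he]; exact hD
    have hmap := hD'.map_nhds_eq_of_equiv
    rw [← hmap, Filter.mem_map]
    have : G ⁻¹' Set.range G = Set.univ := by
      ext z; simp [Set.mem_range_self]
    rw [this]
    exact Filter.univ_mem
  have hne : (Set.range G).Nonempty := ⟨G 0, 0, rfl⟩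
  have huniv : Set.range G = Set.univ := IsClopen.eq_univ ⟨hclosed, hopen⟩ hne
  intro y
  have : y ∈ Set.range G := by rw [huniv]; trivial
  exact this


lemma aux_moll_surj {d : ℕ} {F : EuclideanSpace ℝ (Fin d) → EuclideanSpace ℝ (Fin d)}
    (hF : Continuous F) {ε : ℝ} (hε : 0 < ε)
    (hsm : ∀ x y, ε * ‖x - y‖ ^ 2 ≤ ⟪F x - F y, x - y⟫)
    (haux : ∀ G : EuclideanSpace ℝ (Fin d) → EuclideanSpace ℝ (Fin d), ContDiff ℝ 1 G →
      (∀ x y, ε * ‖x - y‖ ^ 2 ≤ ⟪G x - G y, x - y⟫) → Function.Surjective G) :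
    Function.Surjective F := by
  intro y
  have hδ : ∀ n : ℕ, (0:ℝ) < 1 / (n + 1) := fun n => by positivity
  let φ : ℕ → ContDiffBump (0 : EuclideanSpace ℝ (Fin d)) :=
    fun n => ⟨1 / (2 * (n + 1)), 1 / (n + 1), by positivity, by
      rw [div_lt_div_iff₀ (by positivity) (by positivity)]; nlinarith [hδ n]⟩
  let η : ℕ → EuclideanSpace ℝ (Fin d) → ℝ := fun n => (φ n).normed volume
  let Fn : ℕ → EuclideanSpace ℝ (Fin d) → EuclideanSpace ℝ (Fin d) :=
    fun n => (η n) ⋆[ContinuousLinearMap.lsmul ℝ ℝ, volume] F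
  have hηc : ∀ n, Continuous (η n) := fun n => (φ n).continuous_normed
  have hηsupp : ∀ n, HasCompactSupport (η n) := fun n => (φ n).hasCompactSupport_normed
  have hηnonneg : ∀ n t, 0 ≤ η n t := fun n t => (φ n).nonneg_normed t
  have hη1 : ∀ n, ∫ t, η n t = 1 := fun n => (φ n).integral_normed
  -- integrability
  have hint : ∀ (n : ℕ) (x : EuclideanSpace ℝ (Fin d)),
      Integrable (fun t => η n t • F (x - t)) volume := by
    intro n x
    exact ((hηc n).smul (hF.comp (continuous_const.sub continuous_id))).integrable_of_hasCompactSupport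
      ((hηsupp n).smul_right)
  -- value formula
  have hval : ∀ (n : ℕ) (x : EuclideanSpace ℝ (Fin d)),
      Fn n x = ∫ t, η n t • F (x - t) := by
    intro n x
    simp only [Fn, convolution_def, ContinuousLinearMap.lsmul_apply]
  -- smoothness
  have hsmooth : ∀ n, ContDiff ℝ 1 (Fn n) := by
    intro n
    exact (hηsupp n).contDiff_convolution_left _ (φ n).contDiff_normed hF.locallyIntegrable
  -- strong monotonicity
  have hmono : ∀ n x y, ε * ‖x - y‖ ^ 2 ≤ ⟪Fn n x - Fn n y, x - y⟫ := by
    intro n x y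
    have hsub : Fn n x - Fn n y = ∫ t, η n t • (F (x - t) - F (y - t)) := by
      rw [hval n x, hval n y, ← integral_sub (hint n x) (hint n y)]
      congr 1; ext t; rw [smul_sub]
    have hintsub : Integrable (fun t => η n t • (F (x - t) - F (y - t))) volume := by
      simpa [smul_sub, Pi.sub_def] using (hint n x).sub (hint n y)
    have hinner : ⟪Fn n x - Fn n y, x - y⟫
        = ∫ t, η n t * ⟪F (x - t) - F (y - t), x - y⟫ := by
      rw [hsub, real_inner_comm, ← integral_inner hintsub (x - y)]
      congr 1; ext t
      rw [real_inner_comm, real_inner_smul_left]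
    rw [hinner]
    have hrhs : Integrable (fun t => η n t * ⟪F (x - t) - F (y - t), x - y⟫) volume := by
      have h := hintsub.inner_const (𝕜 := ℝ) (x - y)
      refine h.congr (Eventually.of_forall fun t => ?_)
      show ⟪η n t • (F (x - t) - F (y - t)), x - y⟫ = η n t * ⟪F (x - t) - F (y - t), x - y⟫
      rw [real_inner_smul_left]
    have hlhs : Integrable (fun t => η n t * (ε * ‖x - y‖ ^ 2)) volume :=
      ((φ n).integrable_normed).mul_const _
    have hle : (∫ t, η n t * (ε * ‖x - y‖ ^ 2))
        ≤ ∫ t, η n t * ⟪F (x - t) - F (y - t), x - y⟫ := by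
      apply integral_mono hlhs hrhs
      intro t
      have := hsm (x - t) (y - t)
      have heq : x - t - (y - t) = x - y := by abel
      rw [heq] at this
      exact mul_le_mul_of_nonneg_left this (hηnonneg n t)
    calc ε * ‖x - y‖ ^ 2 = (∫ t, η n t) * (ε * ‖x - y‖ ^ 2) := by rw [hη1 n]; ring
      _ = ∫ t, η n t * (ε * ‖x - y‖ ^ 2) := by rw [integral_mul_const]
      _ ≤ _ := hle
  -- solve each mollified equation
  have hsol : ∀ n, ∃ x, Fn n x = y := fun n => haux (Fn n) (hsmooth n) (hmono n) y
  choose xs hxs using hsol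
  -- uniform bound on Fn n 0
  obtain ⟨M0, hM0⟩ := (isCompact_closedBall (0 : EuclideanSpace ℝ (Fin d)) 1).exists_bound_of_continuousOn hF.continuousOn
  set M := max M0 0 with hMdef
  have hM : ∀ z : EuclideanSpace ℝ (Fin d), ‖z‖ ≤ 1 → ‖F z‖ ≤ M :=
    fun z hz => (hM0 z (by simpa [mem_closedBall, dist_eq_norm] using hz)).trans (le_max_left _ _)
  have hFn0 : ∀ n, ‖Fn n 0‖ ≤ M := by
    intro n
    rw [hval n 0]
    calc ‖∫ t, η n t • F (0 - t)‖ ≤ ∫ t, ‖η n t • F (0 - t)‖ :=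
          norm_integral_le_integral_norm _
      _ ≤ ∫ t, η n t * M := by
          apply integral_mono (hint n 0).norm (((φ n).integrable_normed).mul_const _)
          intro t
          show ‖η n t • F (0 - t)‖ ≤ η n t * M
          rw [norm_smul, Real.norm_eq_abs, abs_of_nonneg (hηnonneg n t)]
          by_cases ht : η n t = 0
          · simp [ht]
          · have hts : t ∈ Function.support (η n) := ht
            rw [(φ n).support_normed_eq] at hts
            have htball : ‖t‖ < 1 / (↑n + 1) := by rw [mem_ball_zero_iff] at hts; exact hts
            have ht1 : ‖(0:EuclideanSpace ℝ (Fin d)) - t‖ ≤ 1 := by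
              rw [zero_sub, norm_neg]
              calc ‖t‖ ≤ 1 / (↑n + 1) := le_of_lt htball
                _ ≤ 1 := by rw [div_le_one (by positivity)]; linarith [Nat.cast_nonneg (α := ℝ) n]
            exact mul_le_mul_of_nonneg_left (hM _ ht1) (hηnonneg n t)
      _ = M := by rw [integral_mul_const, hη1 n, one_mul]
  -- uniform bound on solutions
  set R := (‖y‖ + M) / ε with hRdef
  have hxsbound : ∀ n, ‖xs n‖ ≤ R := by
    intro n
    have h1 : ε * ‖xs n - 0‖ ^ 2 ≤ ⟪Fn n (xs n) - Fn n 0, xs n - 0⟫ := hmono n (xs n) 0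
    rw [sub_zero, hxs n] at h1
    have h2 : ⟪y - Fn n 0, xs n⟫ ≤ ‖y - Fn n 0‖ * ‖xs n‖ := real_inner_le_norm _ _
    have h3 : ‖y - Fn n 0‖ ≤ ‖y‖ + M := (norm_sub_le _ _).trans (by linarith [hFn0 n])
    have h4 : ε * ‖xs n‖ ^ 2 ≤ (‖y‖ + M) * ‖xs n‖ := by
      nlinarith [norm_nonneg (xs n), h1, h2, h3]
    rcases eq_or_lt_of_le (norm_nonneg (xs n)) with h0 | h0
    · rw [← h0, hRdef]
      have hMn : 0 ≤ M := le_max_right _ _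
      positivity
    · rw [hRdef, le_div_iff₀ hε]
      nlinarith [h4, h0]
  -- extract convergent subsequence
  have hmem : ∀ n, xs n ∈ closedBall (0 : EuclideanSpace ℝ (Fin d)) R := by
    intro n; rw [mem_closedBall, dist_eq_norm, sub_zero]; exact hxsbound n
  obtain ⟨xlim, _, ψ, hψmono, hψtend⟩ :=
    (isCompact_closedBall (0 : EuclideanSpace ℝ (Fin d)) R).isSeqCompact hmem
  -- pass to the limit using bump convolution convergence
  have hrOut : Tendsto (fun i => (φ (ψ i)).rOut) atTop (nhds 0) := by
    have h1 : Tendsto (fun n : ℕ => 1 / ((n : ℝ) + 1)) atTop (nhds 0) :=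
      tendsto_one_div_add_atTop_nhds_zero_nat
    exact h1.comp hψmono.tendsto_atTop
  have hlim : Tendsto (fun i => Fn (ψ i) (xs (ψ i))) atTop (nhds (F xlim)) := by
    apply ContDiffBump.convolution_tendsto_right hrOut
    · exact Eventually.of_forall fun _ => hF.aestronglyMeasurable
    · exact (hF.tendsto xlim).comp tendsto_snd
    · exact hψtend
  have hconst : Tendsto (fun i => Fn (ψ i) (xs (ψ i))) atTop (nhds y) := by
    simp only [hxs]; exact tendsto_const_nhds
  exact ⟨xlim, tendsto_nhds_unique hlim hconst⟩


lemma aux_mono_zero {d : ℕ} {F : EuclideanSpace ℝ (Fin d) → EuclideanSpace ℝ (Fin d)}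
    (hF : Continuous F)
    (hm : ∀ x y, 0 ≤ ⟪F x - F y, x - y⟫)
    (hco : ∀ C : ℝ, ∃ ρ : ℝ, 1 ≤ ρ ∧ ∀ x, ρ ≤ ‖x‖ → C * ‖x‖ ≤ ⟪F x, x⟫)
    (hstrong : ∀ (G : EuclideanSpace ℝ (Fin d) → EuclideanSpace ℝ (Fin d)) (ε : ℝ),
      Continuous G → 0 < ε → (∀ x y, ε * ‖x - y‖ ^ 2 ≤ ⟪G x - G y, x - y⟫) →
      Function.Surjective G) :
    ∃ x, F x = 0 := by
  have hε : ∀ n : ℕ, (0:ℝ) < 1 / (n + 1) := fun n => by positivity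
  have hsol : ∀ n : ℕ, ∃ x, F x + (1 / ((n:ℝ) + 1)) • x = 0 := by
    intro n
    set G : EuclideanSpace ℝ (Fin d) → EuclideanSpace ℝ (Fin d) :=
      fun x => F x + (1 / ((n:ℝ) + 1)) • x with hGdef
    have hGc : Continuous G := hF.add (continuous_const_smul _)
    have hGm : ∀ x y, (1 / ((n:ℝ) + 1)) * ‖x - y‖ ^ 2 ≤ ⟪G x - G y, x - y⟫ := by
      intro x y
      have h1 : G x - G y = (F x - F y) + (1 / ((n:ℝ) + 1)) • (x - y) := by
        simp only [hGdef, smul_sub]; abel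
      rw [h1, inner_add_left, real_inner_smul_left, real_inner_self_eq_norm_sq]
      nlinarith [hm x y]
    exact hstrong G _ hGc (hε n) hGm 0
  choose xs hxs using hsol
  obtain ⟨ρ, hρ1, hρ⟩ := hco 1
  have hFxs : ∀ n, F (xs n) = -((1 / ((n:ℝ) + 1)) • xs n) := by
    intro n
    have := hxs n
    rwa [add_eq_zero_iff_eq_neg] at this
  have hbound : ∀ n, ‖xs n‖ ≤ ρ := by
    intro n
    by_contra hlt
    push_neg at hlt
    have h1 : 1 * ‖xs n‖ ≤ ⟪F (xs n), xs n⟫ := hρ _ (le_of_lt hlt)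
    have h2 : ⟪F (xs n), xs n⟫ = -((1 / ((n:ℝ) + 1)) * ‖xs n‖ ^ 2) := by
      rw [hFxs n, inner_neg_left, real_inner_smul_left, real_inner_self_eq_norm_sq]
    rw [h2] at h1
    nlinarith [hε n, norm_nonneg (xs n), sq_nonneg ‖xs n‖, hρ1, hlt]
  have hmem : ∀ n, xs n ∈ closedBall (0 : EuclideanSpace ℝ (Fin d)) ρ := by
    intro n; rw [mem_closedBall, dist_eq_norm, sub_zero]; exact hbound n
  obtain ⟨xlim, _, ψ, hψmono, hψtend⟩ :=
    (isCompact_closedBall (0 : EuclideanSpace ℝ (Fin d)) ρ).isSeqCompact hmem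
  refine ⟨xlim, ?_⟩
  have hlim1 : Tendsto (fun i => F (xs (ψ i))) atTop (nhds (F xlim)) :=
    (hF.tendsto xlim).comp hψtend
  have hlim2 : Tendsto (fun i => F (xs (ψ i))) atTop (nhds 0) := by
    apply squeeze_zero_norm (a := fun i => (1 / ((ψ i : ℝ) + 1)) * ρ)
    · intro i
      rw [hFxs (ψ i), norm_neg, norm_smul, Real.norm_eq_abs, abs_of_pos (hε (ψ i))]
      exact mul_le_mul_of_nonneg_left (hbound (ψ i)) (le_of_lt (hε (ψ i)))
    · have h1 : Tendsto (fun n : ℕ => 1 / ((n : ℝ) + 1)) atTop (nhds 0) :=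
        tendsto_one_div_add_atTop_nhds_zero_nat
      have := (h1.comp hψmono.tendsto_atTop).mul_const ρ
      simpa using this
  exact tendsto_nhds_unique hlim1 hlim2


lemma aux_galerkin (V : Type*) [NormedAddCommGroup V] [NormedSpace ℝ V] [CompleteSpace V]
    (A : V → StrongDual ℝ V) (f : StrongDual ℝ V)
    (hcont : Continuous A)
    (hmono : ∀ u v : V, 0 ≤ (A u - A v) (u - v))
    (hco : ∀ C : ℝ, ∃ ρ : ℝ, 1 ≤ ρ ∧ ∀ v : V, ρ ≤ ‖v‖ → C * ‖v‖ ≤ A v v)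
    (hzero : ∀ (d : ℕ) (F : EuclideanSpace ℝ (Fin d) → EuclideanSpace ℝ (Fin d)),
      Continuous F → (∀ x y, 0 ≤ ⟪F x - F y, x - y⟫) →
      (∀ C : ℝ, ∃ ρ : ℝ, 1 ≤ ρ ∧ ∀ x, ρ ≤ ‖x‖ → C * ‖x‖ ≤ ⟪F x, x⟫) →
      ∃ x, F x = 0)
    (ρf : ℝ) (hρf1 : 1 ≤ ρf) (hρf : ∀ v : V, ρf ≤ ‖v‖ → (‖f‖ + 1) * ‖v‖ ≤ A v v)
    (e : ℕ → V) (n : ℕ) :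
    ∃ w : V, ‖w‖ ≤ ρf ∧ (A w) w = f w ∧ ∀ k < n, (A w) (e k) = f (e k) := by
  classical
  -- the finite-dimensional subspace
  set Wn : Submodule ℝ V := Submodule.span ℝ (Set.range (fun i : Fin n => e i)) with hWn
  haveI : Module.Finite ℝ Wn := by
    apply FiniteDimensional.span_of_finite
    exact Set.finite_range _
  set d : ℕ := Module.finrank ℝ Wn with hd
  let b : Module.Basis (Fin d) ℝ Wn := Module.finBasis ℝ Wn
  -- linear identification
  let T : EuclideanSpace ℝ (Fin d) ≃ₗ[ℝ] Wn :=
    (WithLp.linearEquiv 2 ℝ (Fin d → ℝ)).trans b.equivFun.symm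
  let ΦL : EuclideanSpace ℝ (Fin d) →ₗ[ℝ] V := Wn.subtype.comp T.toLinearMap
  have hΦc : Continuous ΦL := ΦL.continuous_of_finiteDimensional
  let ΦLc : EuclideanSpace ℝ (Fin d) →L[ℝ] V := ΦL.toContinuousLinearMap
  have hΦLc : ∀ z, ΦLc z = ΦL z := fun z => rfl
  have hΦval : ∀ z, ΦL z = (T z : V) := fun z => rfl
  have hΦmem : ∀ z, ΦL z ∈ Wn := fun z => (T z).2
  -- lower bound for the norm
  let SL : Wn →L[ℝ] EuclideanSpace ℝ (Fin d) := T.symm.toLinearMap.toContinuousLinearMap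
  have hSL : ∀ z : EuclideanSpace ℝ (Fin d), ‖z‖ ≤ (‖SL‖ + 1) * ‖ΦL z‖ := by
    intro z
    have h1 : SL (T z) = z := by
      show T.symm (T z) = z
      exact T.symm_apply_apply z
    have h2 : ‖ΦL z‖ = ‖T z‖ := rfl
    calc ‖z‖ = ‖SL (T z)‖ := by rw [h1]
      _ ≤ ‖SL‖ * ‖T z‖ := SL.le_opNorm _
      _ ≤ (‖SL‖ + 1) * ‖ΦL z‖ := by
          rw [h2]; exact mul_le_mul_of_nonneg_right (by linarith) (norm_nonneg _)
  set c : ℝ := ‖SL‖ + 1 with hc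
  have hcpos : 0 < c := by positivity
  -- the finite-dimensional operator
  let G : EuclideanSpace ℝ (Fin d) → EuclideanSpace ℝ (Fin d) :=
    fun z => (InnerProductSpace.toDual ℝ (EuclideanSpace ℝ (Fin d))).symm
      ((A (ΦL z) - f).comp ΦLc)
  have hGkey : ∀ z w, ⟪G z, w⟫ = (A (ΦL z) - f) (ΦLc w) := by
    intro z w
    exact InnerProductSpace.toDual_symm_apply
  -- continuity
  have hGc : Continuous G := by
    apply (LinearIsometryEquiv.continuous _).comp
    apply Continuous.clm_comp _ continuous_const
    exact (hcont.comp hΦc).sub continuous_const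
  -- monotonicity
  have hGm : ∀ z w, 0 ≤ ⟪G z - G w, z - w⟫ := by
    intro z w
    have h1 : ⟪G z - G w, z - w⟫ = ⟪G z, z - w⟫ - ⟪G w, z - w⟫ := by
      rw [inner_sub_left]
    rw [h1, hGkey, hGkey]
    have h2 : ΦLc (z - w) = ΦL z - ΦL w := by rw [map_sub]; rfl
    rw [h2]
    have h3 := hmono (ΦL z) (ΦL w)
    simp only [ContinuousLinearMap.sub_apply] at h3 ⊢
    linarith
  -- coercivity
  have hGco : ∀ C : ℝ, ∃ ρ : ℝ, 1 ≤ ρ ∧ ∀ z, ρ ≤ ‖z‖ → C * ‖z‖ ≤ ⟪G z, z⟫ := by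
    intro C
    set C' : ℝ := ‖f‖ + (max C 0) * c with hC'
    obtain ⟨ρ, hρ1, hρ⟩ := hco C'
    refine ⟨max (c * ρ) 1, le_max_right _ _, fun z hz => ?_⟩
    have hzpos : (0:ℝ) < ‖z‖ := lt_of_lt_of_le one_pos ((le_max_right _ _).trans hz)
    have hΦz : ρ ≤ ‖ΦL z‖ := by
      have h1 : c * ρ ≤ ‖z‖ := (le_max_left _ _).trans hz
      have h2 := hSL z
      have h3 : c * ρ ≤ c * ‖ΦL z‖ := h1.trans h2
      exact le_of_mul_le_mul_left h3 hcpos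
    have h4 := hρ (ΦL z) hΦz
    have h5 : ⟪G z, z⟫ = A (ΦL z) (ΦL z) - f (ΦL z) := by
      rw [hGkey, hΦLc]
      simp only [ContinuousLinearMap.sub_apply]
    have h6 : f (ΦL z) ≤ ‖f‖ * ‖ΦL z‖ := (f.le_opNorm _).trans' (le_abs_self _)
    have h7 : ‖z‖ ≤ c * ‖ΦL z‖ := hSL z
    have h8 : 0 ≤ ‖ΦL z‖ := norm_nonneg _
    rw [h5]
    calc C * ‖z‖ ≤ (max C 0) * ‖z‖ :=
          mul_le_mul_of_nonneg_right (le_max_left _ _) (le_of_lt hzpos)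
      _ ≤ (max C 0) * (c * ‖ΦL z‖) :=
          mul_le_mul_of_nonneg_left h7 (le_max_right _ _)
      _ = (C' - ‖f‖) * ‖ΦL z‖ := by rw [hC']; ring
      _ ≤ A (ΦL z) (ΦL z) - f (ΦL z) := by nlinarith [h4, h6]
  -- solve
  obtain ⟨z₀, hz₀⟩ := hzero d G hGc hGm hGco
  set w : V := ΦL z₀ with hw
  have hwWn : w ∈ Wn := hΦmem z₀
  -- A w agrees with f on Wn
  have hagree : ∀ v, v ∈ Wn → A w v = f v := by
    intro v hv
    have h1 : ΦL (T.symm ⟨v, hv⟩) = v := by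
      rw [hΦval]
      show ((T (T.symm ⟨v, hv⟩)) : V) = v
      rw [T.apply_symm_apply]
    have h2 : ⟪G z₀, T.symm ⟨v, hv⟩⟫ = 0 := by rw [hz₀, inner_zero_left]
    rw [hGkey, hΦLc, h1] at h2
    simp only [ContinuousLinearMap.sub_apply] at h2
    linarith
  -- bound
  have hAww : A w w = f w := hagree w hwWn
  have hbound : ‖w‖ ≤ ρf := by
    by_contra hlt
    push_neg at hlt
    have h1 := hρf w (le_of_lt hlt)
    have h2 : f w ≤ ‖f‖ * ‖w‖ := (f.le_opNorm _).trans' (le_abs_self _)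
    rw [hAww] at h1
    have h3 : (0:ℝ) < ‖w‖ := lt_of_le_of_lt (le_trans zero_le_one hρf1) hlt
    nlinarith
  refine ⟨w, hbound, hAww, fun k hk => ?_⟩
  apply hagree
  apply Submodule.subset_span
  exact ⟨⟨k, hk⟩, rfl⟩

lemma aux_diag {V : Type*} [NormedAddCommGroup V] [NormedSpace ℝ V]
    (g : ℕ → StrongDual ℝ V) (ws : ℕ → V) (K : ℝ) (hK : ∀ n, ‖ws n‖ ≤ K) :
    ∃ ψ : ℕ → ℕ, StrictMono ψ ∧
      ∀ k, ∃ l : ℝ, Tendsto (fun n => g k (ws (ψ n))) atTop (nhds l) := by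
  set S : Set (ℕ → ℝ) := Set.univ.pi (fun k => Set.Icc (-(‖g k‖ * K)) (‖g k‖ * K)) with hS
  have hScomp : IsCompact S := isCompact_univ_pi (fun k => isCompact_Icc)
  have hmem : ∀ n, (fun k => g k (ws n)) ∈ S := by
    intro n
    rw [hS, Set.mem_univ_pi]
    intro k
    have h := (g k).le_opNorm (ws n)
    have h2 : ‖g k (ws n)‖ ≤ ‖g k‖ * K :=
      h.trans (mul_le_mul_of_nonneg_left (hK n) (norm_nonneg _))
    rw [Real.norm_eq_abs, abs_le] at h2
    exact Set.mem_Icc.mpr ⟨h2.1, h2.2⟩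
  obtain ⟨L, _, ψ, hψ, hψt⟩ := hScomp.isSeqCompact hmem
  exact ⟨ψ, hψ, fun k => ⟨L k, (tendsto_pi_nhds.mp hψt) k⟩⟩

lemma aux_limit {V : Type*} [NormedAddCommGroup V] [NormedSpace ℝ V]
    (hrefl : Function.Surjective (NormedSpace.inclusionInDoubleDual ℝ V))
    (g : ℕ → StrongDual ℝ V) (x : ℕ → V) (K : ℝ) (hK : ∀ n, ‖x n‖ ≤ K)
    (hL : ∀ k, ∃ l : ℝ, Tendsto (fun n => g k (x n)) atTop (nhds l)) :
    ∃ u : V, ∀ φ : StrongDual ℝ V, φ ∈ Submodule.span ℝ (Set.range g) →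
      Tendsto (fun n => φ (x n)) atTop (nhds (φ u)) := by
  classical
  set p : Submodule ℝ (StrongDual ℝ V) := Submodule.span ℝ (Set.range g) with hp
  have hconv : ∀ φ ∈ p, ∃ l : ℝ, Tendsto (fun n => φ (x n)) atTop (nhds l) := by
    intro φ hφ
    induction hφ using Submodule.span_induction with
    | mem φ' hφ' =>
        obtain ⟨k, rfl⟩ := hφ'
        exact hL k
    | zero => exact ⟨0, by simpa using (tendsto_const_nhds : Tendsto (fun _ : ℕ => (0:ℝ)) atTop _)⟩
    | add φ₁ φ₂ h1 h2 ih1 ih2 =>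
        obtain ⟨l1, hl1⟩ := ih1
        obtain ⟨l2, hl2⟩ := ih2
        exact ⟨l1 + l2, by simpa [ContinuousLinearMap.add_apply] using hl1.add hl2⟩
    | smul a φ' h ih =>
        obtain ⟨l, hl⟩ := ih
        exact ⟨a * l, by simpa [ContinuousLinearMap.smul_apply] using hl.const_mul a⟩
  choose lim hlim using hconv
  let llin : p →ₗ[ℝ] ℝ :=
    { toFun := fun φ => lim φ.1 φ.2
      map_add' := by
        intro φ ψ
        refine tendsto_nhds_unique (hlim _ (φ + ψ).2) ?_
        have := (hlim φ.1 φ.2).add (hlim ψ.1 ψ.2)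
        simpa [ContinuousLinearMap.add_apply] using this
      map_smul' := by
        intro a φ
        refine tendsto_nhds_unique (hlim _ (a • φ).2) ?_
        have := (hlim φ.1 φ.2).const_mul a
        simpa [ContinuousLinearMap.smul_apply] using this }
  have hb : ∀ φ : p, ‖llin φ‖ ≤ (max K 0) * ‖φ‖ := by
    intro φ
    have habs : Tendsto (fun n => |(φ.1) (x n)|) atTop (nhds |lim φ.1 φ.2|) :=
      (hlim φ.1 φ.2).abs
    have hbd : ∀ n, |(φ.1) (x n)| ≤ ‖φ.1‖ * (max K 0) := by
      intro n
      calc |(φ.1) (x n)| = ‖(φ.1) (x n)‖ := rfl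
        _ ≤ ‖φ.1‖ * ‖x n‖ := (φ.1).le_opNorm _
        _ ≤ ‖φ.1‖ * (max K 0) :=
            mul_le_mul_of_nonneg_left ((hK n).trans (le_max_left _ _)) (norm_nonneg _)
    have h1 : |lim φ.1 φ.2| ≤ ‖φ.1‖ * (max K 0) :=
      le_of_tendsto habs (Eventually.of_forall hbd)
    calc ‖llin φ‖ = |lim φ.1 φ.2| := rfl
      _ ≤ ‖φ.1‖ * (max K 0) := h1
      _ = (max K 0) * ‖φ‖ := by rw [mul_comm]; rfl
  let ℓc : p →L[ℝ] ℝ := LinearMap.mkContinuous (E := p) (F := ℝ) llin (max K 0) hb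
  obtain ⟨Ψ, hΨ, _⟩ := exists_extension_norm_eq p ℓc
  obtain ⟨u, hu⟩ := hrefl Ψ
  refine ⟨u, fun φ hφ => ?_⟩
  have h1 : φ u = Ψ φ := by
    rw [← hu]
    rfl
  have h2 : Ψ φ = lim φ hφ := hΨ ⟨φ, hφ⟩
  rw [h1, h2]
  exact hlim φ hφ

/-- Minty–Browder: a bounded, continuous, coercive, monotone (not necessarily linear) operator
`A` from a real separable reflexive Banach space `V` into its dual `V*` is surjective; if `A` is
moreover strictly monotone, it is injective. -/
theorem stmt1 (V : Type*) [NormedAddCommGroup V] [NormedSpace ℝ V] [CompleteSpace V]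
    [TopologicalSpace.SeparableSpace V]
    (hrefl : Function.Surjective (NormedSpace.inclusionInDoubleDual ℝ V))
    (A : V → StrongDual ℝ V)
    (hbdd : ∀ s : Set V, Bornology.IsBounded s → Bornology.IsBounded (A '' s))
    (hcont : Continuous A)
    (hcoercive : Tendsto (fun v : V => A v v / ‖v‖) (Filter.comap norm Filter.atTop) Filter.atTop)
    (hmono : ∀ u v : V, 0 ≤ (A u - A v) (u - v)) :
    Function.Surjective A ∧
      ((∀ u v : V, u ≠ v → 0 < (A u - A v) (u - v)) → Function.Injective A) := by
  constructor
  · -- Surjectivity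
    intro f
    have hco : ∀ C : ℝ, ∃ ρ : ℝ, 1 ≤ ρ ∧ ∀ v : V, ρ ≤ ‖v‖ → C * ‖v‖ ≤ A v v := by
      intro C
      have h1 : ∀ᶠ v in Filter.comap norm Filter.atTop, C ≤ A v v / ‖v‖ :=
        hcoercive.eventually_ge_atTop C
      rw [Filter.eventually_comap] at h1
      rw [Filter.eventually_atTop] at h1
      obtain ⟨ρ0, hρ0⟩ := h1
      refine ⟨max ρ0 1, le_max_right _ _, fun v hv => ?_⟩
      have hvpos : (0:ℝ) < ‖v‖ := lt_of_lt_of_le one_pos ((le_max_right _ _).trans hv)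
      have h2 := hρ0 ‖v‖ ((le_max_left _ _).trans hv) v rfl
      rw [le_div_iff₀ hvpos] at h2
      exact h2
    obtain ⟨ρf, hρf1, hρf⟩ := hco (‖f‖ + 1)
    have : Nonempty V := ⟨0⟩
    obtain ⟨e, he⟩ := TopologicalSpace.exists_dense_seq V
    -- Galerkin approximations
    have key : ∀ n : ℕ, ∃ w : V, ‖w‖ ≤ ρf ∧ (A w) w = f w ∧
        ∀ k < n, (A w) (e k) = f (e k) := by
      intro n
      refine aux_galerkin V A f hcont hmono hco ?_ ρf hρf1 hρf e n
      intro d F hFc hFm hFco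
      refine aux_mono_zero hFc hFm hFco ?_
      intro G ε hGc hε hGm
      refine aux_moll_surj hGc hε hGm ?_
      intro G' hG' hm'
      exact aux_smooth_surj hG' hε hm'
    choose ws hwsB hwsE hwsK using key
    -- diagonal extraction
    let g : ℕ → StrongDual ℝ V := fun k => Nat.rec f (fun k _ => A (e k)) k
    obtain ⟨ψ, hψmono, hL⟩ := aux_diag g ws ρf hwsB
    -- limit point via Hahn–Banach and reflexivity
    obtain ⟨u, hu⟩ := aux_limit hrefl g (fun n => ws (ψ n)) ρf (fun n => hwsB (ψ n)) hL
    -- Minty inequality on the dense set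
    have hMinty : ∀ k : ℕ, 0 ≤ (f - A (e k)) (u - e k) := by
      intro k
      have hev : ∀ᶠ n in atTop,
          0 ≤ f (ws (ψ n)) - f (e k) - (A (e k)) (ws (ψ n)) + (A (e k)) (e k) := by
        filter_upwards [eventually_ge_atTop (k+1)] with n hn
        have hkn : k < ψ n := lt_of_lt_of_le (Nat.lt_succ_self k) (hn.trans (hψmono.le_apply))
        have h1 := hmono (ws (ψ n)) (e k)
        have h2 : (A (ws (ψ n)) - A (e k)) (ws (ψ n) - e k)
            = A (ws (ψ n)) (ws (ψ n)) - A (ws (ψ n)) (e k)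
              - A (e k) (ws (ψ n)) + A (e k) (e k) := by
          simp only [ContinuousLinearMap.sub_apply, map_sub]; ring
        rw [h2, hwsE (ψ n), hwsK (ψ n) k hkn] at h1
        linarith
      have hlimf : Tendsto (fun n => f (ws (ψ n))) atTop (nhds (f u)) :=
        hu f (Submodule.subset_span ⟨0, rfl⟩)
      have hlimA : Tendsto (fun n => A (e k) (ws (ψ n))) atTop (nhds (A (e k) u)) :=
        hu (A (e k)) (Submodule.subset_span ⟨k+1, rfl⟩)
      have hlim : Tendsto
          (fun n => f (ws (ψ n)) - f (e k) - A (e k) (ws (ψ n)) + A (e k) (e k)) atTop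
          (nhds (f u - f (e k) - A (e k) u + A (e k) (e k))) :=
        (((hlimf.sub_const _).sub hlimA).add_const _)
      have h3 : 0 ≤ f u - f (e k) - A (e k) u + A (e k) (e k) := ge_of_tendsto hlim hev
      have h4 : (f - A (e k)) (u - e k)
          = f u - f (e k) - A (e k) u + A (e k) (e k) := by
        simp only [ContinuousLinearMap.sub_apply, map_sub]; ring
      rw [h4]; exact h3
    -- Minty inequality everywhere by density
    have hMinty' : ∀ v : V, 0 ≤ (f - A v) (u - v) := by
      have hcont2 : Continuous fun v : V => (f - A v) (u - v) := by
        have h1 : Continuous fun v : V => (f - A v : StrongDual ℝ V) :=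
          continuous_const.sub hcont
        have h2 : Continuous fun v : V => u - v := continuous_const.sub continuous_id
        exact (isBoundedBilinearMap_apply.continuous).comp (h1.prodMk h2)
      have hclosed : IsClosed {v : V | 0 ≤ (f - A v) (u - v)} :=
        isClosed_le continuous_const hcont2
      intro v
      have hsub : Set.range e ⊆ {v : V | 0 ≤ (f - A v) (u - v)} := by
        rintro _ ⟨k, rfl⟩; exact hMinty k
      have hsub2 := hclosed.closure_subset_iff.mpr hsub
      rw [DenseRange.closure_range he] at hsub2
      exact hsub2 (Set.mem_univ v)
    -- conclude A u = f via Minty's trick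
    refine ⟨u, ?_⟩
    have hzero : ∀ z : V, (f - A u) z ≤ 0 := by
      intro z
      have hq : Continuous fun t : ℝ => (f - A (u + t • z)) z := by
        have h1 : Continuous fun t : ℝ => (f - A (u + t • z) : StrongDual ℝ V) :=
          continuous_const.sub
            (hcont.comp (continuous_const.add (continuous_id.smul continuous_const)))
        exact (isBoundedBilinearMap_apply.continuous).comp (h1.prodMk continuous_const)
      have hev : ∀ᶠ t in nhdsWithin (0:ℝ) (Set.Ioi 0), (f - A (u + t • z)) z ≤ 0 := by
        filter_upwards [self_mem_nhdsWithin] with t (ht : 0 < t)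
        have h1 := hMinty' (u + t • z)
        have h2 : u - (u + t • z) = -(t • z) := by abel
        rw [h2] at h1
        have h3 : (f - A (u + t • z)) (-(t • z)) = -(t * ((f - A (u + t • z)) z)) := by
          rw [map_neg, ContinuousLinearMap.map_smul]; simp
        rw [h3] at h1
        nlinarith [h1, ht]
      have hlim : Tendsto (fun t : ℝ => (f - A (u + t • z)) z)
          (nhdsWithin (0:ℝ) (Set.Ioi 0)) (nhds ((f - A u) z)) := by
        have h0 := (hq.tendsto 0).mono_left (nhdsWithin_le_nhds (s := Set.Ioi (0:ℝ)))
        simpa using h0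
      exact le_of_tendsto hlim hev
    apply ContinuousLinearMap.ext
    intro z
    have h1 := hzero z
    have h2 := hzero (-z)
    rw [map_neg] at h2
    simp only [ContinuousLinearMap.sub_apply] at h1 h2
    linarith
  · -- Injectivity
    intro hstrict a b hab
    by_contra hne
    have h1 := hstrict a b hne
    rw [hab, sub_self] at h1
    simp at h1
end
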